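/- Let D be a derivation of g(γ,Q) of degree zero, i.e., there is a function φ:ℤ^d→ℂ with D(L_m)=φ(m)L_m for all m∈ℤ^d. Then φ is additive (φ(m+n)=φ(m)+φ(n) for all m,n∈ℤ^d), and consequently D=Σ_{i=1}^d φ(e_i)∂_i, where ∂_i is the derivation defined by ∂_i(L_m)=m_i L_m. In particular the space of degree-zero derivations of g is exactly the span of ∂_1,…,∂_d. -/
import Mathlib


open scoped BigOperators

namespace QTorus

/-- σ(m,n) = ∏_{i<j} q_{ji}^{m_j n_i}. -/
noncomputable def qsigma (d : ℕ) (Q : Matrix (Fin d) (Fin d) ℂ) (m n : Fin d → ℤ) : ℂ :=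
  ∏ i : Fin d, ∏ j : Fin d, if i < j then Q j i ^ (m j * n i) else 1

/-- The radical subgroup R = {m | σ(m,n)=σ(n,m) for all n}. -/
def Rset (d : ℕ) (Q : Matrix (Fin d) (Fin d) ℂ) : Set (Fin d → ℤ) :=
  {m | ∀ n : Fin d → ℤ, qsigma d Q m n = qsigma d Q n m}

/-- (γ|m) = ∑ γ_i m_i. -/
noncomputable def ip (d : ℕ) (γ : Fin d → ℂ) (m : Fin d → ℤ) : ℂ :=
  ∑ i : Fin d, γ i * (m i : ℂ)

/-- The underlying vector space of g(γ,Q): formal ℂ-linear combinations of basis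
vectors indexed by ℤ^d. -/
abbrev g (d : ℕ) := (Fin d → ℤ) →₀ ℂ

/-- The basis vector L_m. -/
noncomputable def L (d : ℕ) (m : Fin d → ℤ) : g d := Finsupp.single m 1

/-- Hypotheses on the matrix Q: nonzero entries, q_{ii}=1, q_{ij}q_{ji}=1. -/
def QOk (d : ℕ) (Q : Matrix (Fin d) (Fin d) ℂ) : Prop :=
  (∀ i, Q i i = 1) ∧ (∀ i j, Q i j * Q j i = 1) ∧ (∀ i j, Q i j ≠ 0)

/-- γ is generic: γ_1,…,γ_d are linearly independent over ℚ. -/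
def Generic (d : ℕ) (γ : Fin d → ℂ) : Prop := LinearIndependent ℚ γ

open Classical in
/-- Structure constants of g(γ,Q): [L_m, L_n] = sc(m,n) • L_{m+n}. -/
noncomputable def sc (d : ℕ) (Q : Matrix (Fin d) (Fin d) ℂ) (γ : Fin d → ℂ)
    (m n : Fin d → ℤ) : ℂ :=
  if m ∈ Rset d Q then
    (if n ∈ Rset d Q then qsigma d Q m n * ip d γ (n - m)
     else qsigma d Q m n * ip d γ n)
  else
    (if n ∈ Rset d Q then -(qsigma d Q n m * ip d γ m)
     else qsigma d Q m n - qsigma d Q n m)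

/-- The bracket of g(γ,Q), as the bilinear extension of
[L_m, L_n] = sc(m,n) • L_{m+n}. -/
noncomputable def br (d : ℕ) (Q : Matrix (Fin d) (Fin d) ℂ) (γ : Fin d → ℂ)
    (x y : g d) : g d :=
  x.sum fun m a => y.sum fun n b => Finsupp.single (m + n) (a * b * sc d Q γ m n)

/-- A Lie algebra automorphism of g(γ,Q): a linear equivalence preserving the bracket. -/
def IsAut (d : ℕ) (Q : Matrix (Fin d) (Fin d) ℂ) (γ : Fin d → ℂ)
    (θ : g d ≃ₗ[ℂ] g d) : Prop :=
  ∀ x y : g d, θ (br d Q γ x y) = br d Q γ (θ x) (θ y)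

/-- A derivation of g(γ,Q). -/
def IsDer (d : ℕ) (Q : Matrix (Fin d) (Fin d) ℂ) (γ : Fin d → ℂ)
    (D : g d →ₗ[ℂ] g d) : Prop :=
  ∀ x y : g d, D (br d Q γ x y) = br d Q γ (D x) y + br d Q γ x (D y)

open Classical in
/-- δ(n,R) = 1 if n ∈ R, 0 otherwise. -/
noncomputable def deltaR (d : ℕ) (Q : Matrix (Fin d) (Fin d) ℂ) (n : Fin d → ℤ) : ℕ :=
  if n ∈ Rset d Q then 1 else 0

/-- A 2-cocycle on g(γ,Q). -/
def IsCocycle (d : ℕ) (Q : Matrix (Fin d) (Fin d) ℂ) (γ : Fin d → ℂ)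
    (α : g d →ₗ[ℂ] g d →ₗ[ℂ] ℂ) : Prop :=
  (∀ x y : g d, α x y = - α y x) ∧
  (∀ x y z : g d,
    α (br d Q γ x y) z + α (br d Q γ z x) y + α (br d Q γ y z) x = 0)

/-- i ↔ j is one of the exceptional index pairs (2l-1,2l) (1-based) of the rational
normal form. Here indices are 0-based. -/
def OffDiagPair (z : ℕ) (i j : ℕ) : Prop :=
  ∃ l : ℕ, l < z ∧ ((i = 2 * l ∧ j = 2 * l + 1) ∨ (i = 2 * l + 1 ∧ j = 2 * l))

/-- Q is in rational normal form with parameters z and k_1,…,k_d (0-based indexing: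
the paper's pair (2i-1,2i) is the Lean pair (2l, 2l+1) with l = i-1). -/
def IsRNF (d : ℕ) (Q : Matrix (Fin d) (Fin d) ℂ) (z : ℕ) (k : Fin d → ℕ) : Prop :=
  0 < z ∧ 2 * z ≤ d ∧
  (∀ i j : Fin d, ¬ OffDiagPair z i.val j.val → Q i j = 1) ∧
  (∀ (l : ℕ) (_ : l < z) (hi : 2 * l < d) (hj : 2 * l + 1 < d),
      IsPrimitiveRoot (Q ⟨2 * l, hi⟩ ⟨2 * l + 1, hj⟩) (k ⟨2 * l, hi⟩) ∧
      Q ⟨2 * l + 1, hj⟩ ⟨2 * l, hi⟩ = (Q ⟨2 * l, hi⟩ ⟨2 * l + 1, hj⟩)⁻¹ ∧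
      k ⟨2 * l + 1, hj⟩ = k ⟨2 * l, hi⟩ ∧
      1 < k ⟨2 * l, hi⟩) ∧
  (∀ (i : ℕ) (_ : i + 1 < 2 * z) (h1 : i < d) (h2 : i + 1 < d),
      k ⟨i + 1, h2⟩ ∣ k ⟨i, h1⟩) ∧
  (∀ i : Fin d, 2 * z ≤ i.val → k i = 1)

/-- The vector k_1 e_1 ∈ ℤ^d. -/
noncomputable def k1e1 (d : ℕ) (k : Fin d → ℕ) (hd : 0 < d) : Fin d → ℤ :=
  Pi.single ⟨0, hd⟩ (k ⟨0, hd⟩ : ℤ)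

/-- A 2-cocycle is normalized if α(L_{m-k₁e₁}, L_{k₁e₁})=0 for m ∈ R, m ≠ 2k₁e₁,
α(L_0, L_{2k₁e₁})=0, α(L_0, L_s)=0 for s ∉ R, and α(L_m,L_n)=0 whenever m+n ≠ 0. -/
def IsNormalized (d : ℕ) (Q : Matrix (Fin d) (Fin d) ℂ) (k : Fin d → ℕ) (hd : 0 < d)
    (α : g d →ₗ[ℂ] g d →ₗ[ℂ] ℂ) : Prop :=
  (∀ m ∈ Rset d Q, m ≠ 2 • k1e1 d k hd →
      α (L d (m - k1e1 d k hd)) (L d (k1e1 d k hd)) = 0) ∧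
  α (L d 0) (L d (2 • k1e1 d k hd)) = 0 ∧
  (∀ s, s ∉ Rset d Q → α (L d 0) (L d s) = 0) ∧
  (∀ m n : Fin d → ℤ, m + n ≠ 0 → α (L d m) (L d n) = 0)

/-- The degree derivation ∂_i, acting by ∂_i(L_m) = m_i L_m. -/
noncomputable def deg (d : ℕ) (i : Fin d) (y : g d) : g d :=
  y.sum fun m a => Finsupp.single m ((m i : ℂ) * a)

open Classical in
/-- The 2-cocycle α₁: α₁(L_m,L_n) = δ_{m+n,0}((m_γ)³-m_γ)/12 for m ∈ R, 0 otherwise,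
where m_γ = (γ|m)/(γ|k₁e₁). -/
noncomputable def alpha1 (d : ℕ) (Q : Matrix (Fin d) (Fin d) ℂ) (γ : Fin d → ℂ)
    (k : Fin d → ℕ) (hd : 0 < d) (x y : g d) : ℂ :=
  x.sum fun m a => y.sum fun n b => a * b *
    (if m ∈ Rset d Q ∧ m + n = 0 then
       ((ip d γ m / ip d γ (k1e1 d k hd)) ^ 3 - ip d γ m / ip d γ (k1e1 d k hd)) / 12
     else 0)

open Classical in
/-- The 2-cocycle α₂: α₂(L_r,L_s) = δ_{r+s,0} σ(r,-r)(γ|r)/(γ|k₁e₁) for r ∉ R,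
0 otherwise. -/
noncomputable def alpha2 (d : ℕ) (Q : Matrix (Fin d) (Fin d) ℂ) (γ : Fin d → ℂ)
    (k : Fin d → ℕ) (hd : 0 < d) (x y : g d) : ℂ :=
  x.sum fun m a => y.sum fun n b => a * b *
    (if m ∉ Rset d Q ∧ m + n = 0 then
       qsigma d Q m (-m) * (ip d γ m / ip d γ (k1e1 d k hd))
     else 0)

end QTorus

open QTorus

namespace QTorus
section Sig
variable {d : ℕ} {Q : Matrix (Fin d) (Fin d) ℂ}

lemma qsigma_ne_zero (hq : ∀ i j, Q i j ≠ 0) (m n : Fin d → ℤ) : qsigma d Q m n ≠ 0 := by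
  unfold qsigma
  rw [Finset.prod_ne_zero_iff]
  intro i _
  rw [Finset.prod_ne_zero_iff]
  intro j _
  split
  · exact zpow_ne_zero _ (hq j i)
  · exact one_ne_zero

lemma qsigma_add_left (hq : ∀ i j, Q i j ≠ 0) (m m' n : Fin d → ℤ) :
    qsigma d Q (m + m') n = qsigma d Q m n * qsigma d Q m' n := by
  unfold qsigma
  rw [← Finset.prod_mul_distrib]
  refine Finset.prod_congr rfl fun i _ => ?_
  rw [← Finset.prod_mul_distrib]
  refine Finset.prod_congr rfl fun j _ => ?_
  split
  · rw [Pi.add_apply, add_mul, zpow_add₀ (hq j i)]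
  · rw [one_mul]

lemma qsigma_add_right (hq : ∀ i j, Q i j ≠ 0) (m n n' : Fin d → ℤ) :
    qsigma d Q m (n + n') = qsigma d Q m n * qsigma d Q m n' := by
  unfold qsigma
  rw [← Finset.prod_mul_distrib]
  refine Finset.prod_congr rfl fun i _ => ?_
  rw [← Finset.prod_mul_distrib]
  refine Finset.prod_congr rfl fun j _ => ?_
  split
  · rw [Pi.add_apply, mul_add, zpow_add₀ (hq j i)]
  · rw [one_mul]

lemma qsigma_zero_left (n : Fin d → ℤ) : qsigma d Q 0 n = 1 := by
  unfold qsigma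
  refine Finset.prod_eq_one fun i _ => Finset.prod_eq_one fun j _ => ?_
  split <;> simp

lemma qsigma_zero_right (n : Fin d → ℤ) : qsigma d Q n 0 = 1 := by
  unfold qsigma
  refine Finset.prod_eq_one fun i _ => Finset.prod_eq_one fun j _ => ?_
  split <;> simp

lemma qsigma_neg_left (hq : ∀ i j, Q i j ≠ 0) (m n : Fin d → ℤ) :
    qsigma d Q (-m) n = (qsigma d Q m n)⁻¹ := by
  have h := qsigma_add_left hq m (-m) n
  rw [add_neg_cancel, qsigma_zero_left] at h
  rw [eq_inv_of_mul_eq_one_right h.symm]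

lemma qsigma_neg_right (hq : ∀ i j, Q i j ≠ 0) (m n : Fin d → ℤ) :
    qsigma d Q m (-n) = (qsigma d Q m n)⁻¹ := by
  have h := qsigma_add_right hq m n (-n)
  rw [add_neg_cancel, qsigma_zero_right] at h
  rw [eq_inv_of_mul_eq_one_right h.symm]

/-- the bimultiplicative ratio character -/
noncomputable def cc (Q : Matrix (Fin d) (Fin d) ℂ) (m n : Fin d → ℤ) : ℂ :=
  qsigma d Q m n / qsigma d Q n m

lemma cc_ne_zero (hq : ∀ i j, Q i j ≠ 0) (m n : Fin d → ℤ) : cc Q m n ≠ 0 :=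
  div_ne_zero (qsigma_ne_zero hq m n) (qsigma_ne_zero hq n m)

lemma cc_eq_one_iff (hq : ∀ i j, Q i j ≠ 0) (m n : Fin d → ℤ) :
    cc Q m n = 1 ↔ qsigma d Q m n = qsigma d Q n m :=
  div_eq_one_iff_eq (qsigma_ne_zero hq n m)

lemma cc_add_left (hq : ∀ i j, Q i j ≠ 0) (m m' n : Fin d → ℤ) :
    cc Q (m + m') n = cc Q m n * cc Q m' n := by
  unfold cc
  rw [qsigma_add_left hq, qsigma_add_right hq, div_mul_div_comm]

lemma cc_add_right (hq : ∀ i j, Q i j ≠ 0) (m n n' : Fin d → ℤ) :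
    cc Q m (n + n') = cc Q m n * cc Q m n' := by
  unfold cc
  rw [qsigma_add_right hq, qsigma_add_left hq, div_mul_div_comm]

lemma cc_neg_left (hq : ∀ i j, Q i j ≠ 0) (m n : Fin d → ℤ) :
    cc Q (-m) n = (cc Q m n)⁻¹ := by
  unfold cc
  rw [qsigma_neg_left hq, qsigma_neg_right hq, inv_div_inv, inv_div]

lemma cc_swap (m n : Fin d → ℤ) : cc Q n m = (cc Q m n)⁻¹ := by
  unfold cc
  rw [inv_div]

lemma cc_self (hq : ∀ i j, Q i j ≠ 0) (m : Fin d → ℤ) : cc Q m m = 1 :=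
  div_self (qsigma_ne_zero hq m m)

lemma cc_one_of_right_mem (hq : ∀ i j, Q i j ≠ 0) (m n : Fin d → ℤ)
    (hn : n ∈ Rset d Q) : cc Q m n = 1 := by
  rw [cc_eq_one_iff hq]
  exact (hn m).symm

lemma cc_one_of_left_mem (hq : ∀ i j, Q i j ≠ 0) (m n : Fin d → ℤ)
    (hm : m ∈ Rset d Q) : cc Q m n = 1 := by
  rw [cc_eq_one_iff hq]
  exact hm n

lemma notMem_of_cc_ne_one (hq : ∀ i j, Q i j ≠ 0) {m t : Fin d → ℤ}
    (h : cc Q m t ≠ 1) : t ∉ Rset d Q :=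
  fun ht => h (cc_one_of_right_mem hq m t ht)

lemma exists_cc_ne_one (hq : ∀ i j, Q i j ≠ 0) {s : Fin d → ℤ} (hs : s ∉ Rset d Q) :
    ∃ t, cc Q s t ≠ 1 ∧ t ∉ Rset d Q := by
  have : ¬ ∀ n, qsigma d Q s n = qsigma d Q n s := hs
  push_neg at this
  obtain ⟨t, ht⟩ := this
  have h1 : cc Q s t ≠ 1 := fun h => ht ((cc_eq_one_iff hq s t).1 h)
  exact ⟨t, h1, notMem_of_cc_ne_one hq h1⟩

lemma zero_mem_R : (0 : Fin d → ℤ) ∈ Rset d Q := by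
  intro n
  rw [qsigma_zero_left, qsigma_zero_right]

lemma add_mem_R (hq : ∀ i j, Q i j ≠ 0) {m m' : Fin d → ℤ}
    (hm : m ∈ Rset d Q) (hm' : m' ∈ Rset d Q) : m + m' ∈ Rset d Q := by
  intro n
  rw [qsigma_add_left hq, qsigma_add_right hq, hm n, hm' n]

lemma neg_mem_R (hq : ∀ i j, Q i j ≠ 0) {m : Fin d → ℤ}
    (hm : m ∈ Rset d Q) : -m ∈ Rset d Q := by
  intro n
  rw [qsigma_neg_left hq, qsigma_neg_right hq, hm n]

lemma notMem_R_add (hq : ∀ i j, Q i j ≠ 0) {m t : Fin d → ℤ}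
    (hm : m ∈ Rset d Q) (ht : t ∉ Rset d Q) : m + t ∉ Rset d Q := by
  intro h
  have := add_mem_R hq (neg_mem_R hq hm) h
  rw [neg_add_cancel_left] at this
  exact ht this

lemma ne_zero_of_notMem_R {s : Fin d → ℤ} (hs : s ∉ Rset d Q) : s ≠ 0 := by
  rintro rfl
  exact hs zero_mem_R

lemma ip_eq_zero_iff {γ : Fin d → ℂ} (hγ : Generic d γ) (v : Fin d → ℤ) :
    ip d γ v = 0 ↔ v = 0 := by
  constructor
  · intro h
    have h2 : ∀ i, (fun i => (v i : ℚ)) i = 0 := by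
      apply Fintype.linearIndependent_iff.mp hγ
      rw [← h]
      unfold ip
      refine Finset.sum_congr rfl fun i _ => ?_
      rw [Rat.smul_def]
      push_cast
      ring
    funext i
    have := h2 i
    simp only at this
    exact_mod_cast this
  · rintro rfl
    simp [ip]

end Sig
end QTorus

namespace QTorus
section Sc
variable {d : ℕ} {Q : Matrix (Fin d) (Fin d) ℂ} {γ : Fin d → ℂ}

lemma sc_ne_RR (hq : ∀ i j, Q i j ≠ 0) (hγ : Generic d γ) {m n : Fin d → ℤ}
    (hm : m ∈ Rset d Q) (hn : n ∈ Rset d Q) (hmn : m ≠ n) : sc d Q γ m n ≠ 0 := by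
  unfold sc
  rw [if_pos hm, if_pos hn]
  refine mul_ne_zero (qsigma_ne_zero hq m n) ?_
  intro h
  have := (ip_eq_zero_iff hγ (n - m)).1 h
  exact hmn (sub_eq_zero.1 this).symm

lemma sc_ne_RN (hq : ∀ i j, Q i j ≠ 0) (hγ : Generic d γ) {m n : Fin d → ℤ}
    (hm : m ∈ Rset d Q) (hn : n ∉ Rset d Q) : sc d Q γ m n ≠ 0 := by
  unfold sc
  rw [if_pos hm, if_neg hn]
  refine mul_ne_zero (qsigma_ne_zero hq m n) ?_
  intro h
  exact ne_zero_of_notMem_R hn ((ip_eq_zero_iff hγ n).1 h)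

lemma sc_ne_NR (hq : ∀ i j, Q i j ≠ 0) (hγ : Generic d γ) {m n : Fin d → ℤ}
    (hm : m ∉ Rset d Q) (hn : n ∈ Rset d Q) : sc d Q γ m n ≠ 0 := by
  unfold sc
  rw [if_neg hm, if_pos hn]
  refine neg_ne_zero.2 (mul_ne_zero (qsigma_ne_zero hq n m) ?_)
  intro h
  exact ne_zero_of_notMem_R hm ((ip_eq_zero_iff hγ m).1 h)

lemma sc_ne_NN (hq : ∀ i j, Q i j ≠ 0) {m n : Fin d → ℤ}
    (hm : m ∉ Rset d Q) (hn : n ∉ Rset d Q) (hc : cc Q m n ≠ 1) : sc d Q γ m n ≠ 0 := by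
  unfold sc
  rw [if_neg hm, if_neg hn]
  exact sub_ne_zero.2 (fun h => hc ((cc_eq_one_iff hq m n).2 h))

end Sc
end QTorus

namespace QTorus
section Phi
variable {d : ℕ} {Q : Matrix (Fin d) (Fin d) ℂ} {γ : Fin d → ℂ} {φ : (Fin d → ℤ) → ℂ}

/-- shorthand for the hypothesis that φ is additive at all noncommuting pairs -/
def Key (d : ℕ) (Q : Matrix (Fin d) (Fin d) ℂ) (γ : Fin d → ℂ)
    (φ : (Fin d → ℤ) → ℂ) : Prop :=
  ∀ m n : Fin d → ℤ, sc d Q γ m n ≠ 0 → φ (m + n) = φ m + φ n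

lemma phi_addRR (hq : ∀ i j, Q i j ≠ 0) (hγ : Generic d γ) (key : Key d Q γ φ)
    {m n : Fin d → ℤ} (hm : m ∈ Rset d Q) (hn : n ∈ Rset d Q)
    (hmn : m ≠ n) : φ (m + n) = φ m + φ n :=
  key m n (sc_ne_RR hq hγ hm hn hmn)

lemma phi_addRN (hq : ∀ i j, Q i j ≠ 0) (hγ : Generic d γ) (key : Key d Q γ φ)
    {m n : Fin d → ℤ} (hm : m ∈ Rset d Q) (hn : n ∉ Rset d Q) :
    φ (m + n) = φ m + φ n :=
  key m n (sc_ne_RN hq hγ hm hn)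

lemma phi_addNR (hq : ∀ i j, Q i j ≠ 0) (hγ : Generic d γ) (key : Key d Q γ φ)
    {m n : Fin d → ℤ} (hm : m ∉ Rset d Q) (hn : n ∈ Rset d Q) :
    φ (m + n) = φ m + φ n :=
  key m n (sc_ne_NR hq hγ hm hn)

lemma phi_addNN (hq : ∀ i j, Q i j ≠ 0) (key : Key d Q γ φ)
    {m n : Fin d → ℤ} (hm : m ∉ Rset d Q) (hn : n ∉ Rset d Q)
    (hc : cc Q m n ≠ 1) : φ (m + n) = φ m + φ n :=
  key m n (sc_ne_NN hq hm hn hc)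

/-- additivity whenever the left entry is in R and the two differ -/
lemma phi_addR (hq : ∀ i j, Q i j ≠ 0) (hγ : Generic d γ) (key : Key d Q γ φ)
    {m n : Fin d → ℤ} (hm : m ∈ Rset d Q) (hmn : m ≠ n) :
    φ (m + n) = φ m + φ n := by
  by_cases hn : n ∈ Rset d Q
  · exact phi_addRR hq hγ key hm hn hmn
  · exact phi_addRN hq hγ key hm hn

lemma phi_double_R (hq : ∀ i j, Q i j ≠ 0) (hγ : Generic d γ) (key : Key d Q γ φ)
    (hd : 0 < d) {m : Fin d → ℤ} (hm : m ∈ Rset d Q) :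
    φ (m + m) = φ m + φ m := by
  set i0 : Fin d := ⟨0, hd⟩
  set k : ℤ := |m i0| + |m i0| + 1 with hk
  set t : Fin d → ℤ := (Pi.single i0 k : Fin d → ℤ) with htdef
  have hti0 : t i0 = k := by rw [htdef]; simp
  have habs1 : m i0 ≤ |m i0| := le_abs_self _
  have habs0 : 0 ≤ |m i0| := abs_nonneg _
  have ht0 : t ≠ 0 := by
    intro h
    have h2 := congrFun h i0
    rw [hti0] at h2
    simp only [Pi.zero_apply] at h2
    omega
  have htm : m ≠ t := by
    intro h
    have h2 := congrFun h i0
    rw [hti0] at h2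
    omega
  have htmm : m + m ≠ t := by
    intro h
    have h2 := congrFun h i0
    rw [hti0] at h2
    simp only [Pi.add_apply] at h2
    omega
  have hB1 : φ ((m + m) + t) = φ (m + m) + φ t :=
    phi_addR hq hγ key (add_mem_R hq hm hm) htmm
  have hB3 : φ (m + t) = φ m + φ t := phi_addR hq hγ key hm htm
  have hB2 : φ (m + (m + t)) = φ m + φ (m + t) := by
    refine phi_addR hq hγ key hm ?_
    intro h
    exact ht0 (left_eq_add.mp h)
  rw [add_assoc m m t, hB2, hB3] at hB1
  linear_combination -hB1

lemma phi_zero (hq : ∀ i j, Q i j ≠ 0) (hγ : Generic d γ) (key : Key d Q γ φ)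
    (hd : 0 < d) : φ 0 = 0 := by
  have he0 : (0 : Fin d → ℤ) ≠ Pi.single (⟨0, hd⟩ : Fin d) (1 : ℤ) := by
    intro h
    have h2 := congrFun h (⟨0, hd⟩ : Fin d)
    rw [Pi.single_eq_same] at h2
    have h3 : (0 : ℤ) = 1 := h2
    omega
  have h := phi_addR hq hγ key zero_mem_R he0
  rw [zero_add] at h
  linear_combination -h

lemma phi_neg (hq : ∀ i j, Q i j ≠ 0) (hγ : Generic d γ) (key : Key d Q γ φ)
    (hd : 0 < d) (t : Fin d → ℤ) : φ (-t) = -φ t := by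
  by_cases ht : t ∈ Rset d Q
  · by_cases ht0 : t = 0
    · subst ht0
      rw [neg_zero, phi_zero hq hγ key hd]
      ring
    · have htne : t ≠ -t := by
        intro h
        apply ht0
        funext i
        have h2 := congrFun h i
        simp only [Pi.neg_apply] at h2
        simp only [Pi.zero_apply]
        omega
      have h := phi_addRR hq hγ key ht (neg_mem_R hq ht) htne
      rw [add_neg_cancel, phi_zero hq hγ key hd] at h
      linear_combination -h
  · obtain ⟨w, hw, hwR⟩ := exists_cc_ne_one hq ht
    have htneg : -t ∉ Rset d Q := fun h => ht (by simpa using neg_mem_R hq h)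
    have h1 : φ (-t + w) = φ (-t) + φ w := by
      refine phi_addNN hq key htneg hwR ?_
      rw [cc_neg_left hq]
      intro h
      rw [inv_eq_one] at h
      exact hw h
    have h2 : φ ((-t + w) + t) = φ (-t + w) + φ t := by
      by_cases h' : -t + w ∈ Rset d Q
      · exact phi_addRN hq hγ key h' ht
      · refine phi_addNN hq key h' ht ?_
        rw [cc_add_left hq, cc_neg_left hq, cc_self hq, inv_one, one_mul, cc_swap]
        intro h
        rw [inv_eq_one] at h
        exact hw h
    have hcomb : (-t + w) + t = w := by abel
    rw [hcomb, h1] at h2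
    linear_combination -h2

lemma phi_double_N (hq : ∀ i j, Q i j ≠ 0) (hγ : Generic d γ) (key : Key d Q γ φ)
    {m : Fin d → ℤ} (hm : m ∉ Rset d Q) :
    φ (m + m) = φ m + φ m := by
  obtain ⟨t, htc, htR, hB1⟩ :
      ∃ t, cc Q m t ≠ 1 ∧ t ∉ Rset d Q ∧ φ ((m + m) + t) = φ (m + m) + φ t := by
    by_cases hmm : m + m ∈ Rset d Q
    · obtain ⟨t, htc, htR⟩ := exists_cc_ne_one hq hm
      exact ⟨t, htc, htR, phi_addRN hq hγ key hmm htR⟩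
    · obtain ⟨t, htc2, htR⟩ := exists_cc_ne_one hq hmm
      have htc : cc Q m t ≠ 1 := by
        intro h
        apply htc2
        rw [cc_add_left hq, h, one_mul]
      exact ⟨t, htc, htR, phi_addNN hq key hmm htR htc2⟩
  have hB3 : φ (m + t) = φ m + φ t := phi_addNN hq key hm htR htc
  have hB2 : φ (m + (m + t)) = φ m + φ (m + t) := by
    by_cases hmt : m + t ∈ Rset d Q
    · exact phi_addNR hq hγ key hm hmt
    · refine phi_addNN hq key hm hmt ?_
      rw [cc_add_right hq, cc_self hq, one_mul]
      exact htc
  rw [add_assoc m m t, hB2, hB3] at hB1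
  linear_combination -hB1

lemma phi_double (hq : ∀ i j, Q i j ≠ 0) (hγ : Generic d γ) (key : Key d Q γ φ)
    (hd : 0 < d) (m : Fin d → ℤ) : φ (m + m) = φ m + φ m := by
  by_cases hm : m ∈ Rset d Q
  · exact phi_double_R hq hγ key hd hm
  · exact phi_double_N hq hγ key hm

end Phi
end QTorus

namespace QTorus
section Phi2
variable {d : ℕ} {Q : Matrix (Fin d) (Fin d) ℂ} {γ : Fin d → ℂ} {φ : (Fin d → ℤ) → ℂ}

lemma phi_hard (hq : ∀ i j, Q i j ≠ 0) (hγ : Generic d γ) (key : Key d Q γ φ)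
    {r s : Fin d → ℤ} (hr : r ∉ Rset d Q) (hs : s ∉ Rset d Q)
    (hrs : cc Q r s = 1) (hr2 : r + r ∉ Rset d Q) : φ (r + s) = φ r + φ s := by
  obtain ⟨a, ha, haR⟩ := exists_cc_ne_one hq hr2
  have hx2 : cc Q r a * cc Q r a ≠ 1 := by rw [← cc_add_left hq]; exact ha
  have hx1 : cc Q r a ≠ 1 := fun h => hx2 (by rw [h, one_mul])
  obtain ⟨t, hT1, hT2, hT3⟩ : ∃ t, cc Q r t ≠ 1 ∧ cc Q s t ≠ 1 ∧
      ((r + s) ∈ Rset d Q ∨ ((r + s) ∉ Rset d Q ∧ cc Q (r + s) t ≠ 1)) := by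
    by_cases hRS : r + s ∈ Rset d Q
    · refine ⟨a, hx1, ?_, Or.inl hRS⟩
      intro h
      apply hx1
      have h2 := cc_one_of_left_mem hq (r + s) a hRS
      rw [cc_add_left hq, h, mul_one] at h2
      exact h2
    · by_cases hya : cc Q s a ≠ 1 ∧ cc Q r a * cc Q s a ≠ 1
      · exact ⟨a, hx1, hya.1, Or.inr ⟨hRS, by rw [cc_add_left hq]; exact hya.2⟩⟩
      · have hy' : cc Q s a = 1 ∨ cc Q r a * cc Q s a = 1 := by tauto
        -- abbreviations
        rcases hy' with hy1 | hxy
        · -- cc Q s a = 1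
          obtain ⟨b, hv, hbR⟩ := exists_cc_ne_one hq hs
          have hu0 : cc Q r b ≠ 0 := cc_ne_zero hq r b
          have ccrba : cc Q r (b + a) = cc Q r b * cc Q r a := cc_add_right hq r b a
          have ccrbaa : cc Q r ((b + a) + a) = cc Q r b * cc Q r a * cc Q r a := by
            rw [cc_add_right hq, ccrba]
          have ccsba : cc Q s (b + a) = cc Q s b := by
            rw [cc_add_right hq, hy1, mul_one]
          have ccsbaa : cc Q s ((b + a) + a) = cc Q s b := by
            rw [cc_add_right hq, ccsba, hy1, mul_one]
          by_cases h0 : cc Q r b ≠ 1 ∧ cc Q r b * cc Q s b ≠ 1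
          · exact ⟨b, h0.1, hv, Or.inr ⟨hRS, by rw [cc_add_left hq]; exact h0.2⟩⟩
          · by_cases h1 : cc Q r b * cc Q r a ≠ 1 ∧ cc Q r b * cc Q r a * cc Q s b ≠ 1
            · refine ⟨b + a, ?_, ?_, Or.inr ⟨hRS, ?_⟩⟩
              · rw [ccrba]; exact h1.1
              · rw [ccsba]; exact hv
              · rw [cc_add_left hq, ccrba, ccsba]; exact h1.2
            · have h0' : cc Q r b = 1 ∨ cc Q r b * cc Q s b = 1 := by
                by_contra hcon
                push_neg at hcon
                exact h0 ⟨hcon.1, hcon.2⟩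
              have h1' : cc Q r b * cc Q r a = 1 ∨ cc Q r b * cc Q r a * cc Q s b = 1 := by
                by_contra hcon
                push_neg at hcon
                exact h1 ⟨hcon.1, hcon.2⟩
              refine ⟨(b + a) + a, ?_, ?_, Or.inr ⟨hRS, ?_⟩⟩ <;>
                [skip; (rw [ccsbaa]; exact hv); skip]
              · rw [ccrbaa]
                rcases h0' with h0' | h0' <;> rcases h1' with h1' | h1'
                · exfalso; rw [h0', one_mul] at h1'; exact hx1 h1'
                · rw [h0', one_mul] at h1' ⊢
                  exact hx2
                · have hvx : cc Q s b = cc Q r a := mul_left_cancel₀ hu0 (h0'.trans h1'.symm)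
                  rw [h1', one_mul]
                  exact hx1
                · exfalso
                  have hx : cc Q r b * cc Q s b * cc Q r a = 1 := by
                    rw [← h1']; ring
                  rw [h0', one_mul] at hx
                  exact hx1 hx
              · rw [cc_add_left hq, ccrbaa, ccsbaa]
                rcases h0' with h0' | h0' <;> rcases h1' with h1' | h1'
                · exfalso; rw [h0', one_mul] at h1'; exact hx1 h1'
                · rw [h0', one_mul] at h1' ⊢
                  have : cc Q r a * cc Q r a * cc Q s b = cc Q r a * (cc Q r a * cc Q s b) := by
                    ring
                  rw [this, h1', mul_one]
                  exact hx1
                · have hvx : cc Q s b = cc Q r a := mul_left_cancel₀ hu0 (h0'.trans h1'.symm)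
                  have : cc Q r b * cc Q r a * cc Q r a * cc Q s b
                      = (cc Q r b * cc Q r a) * (cc Q r a * cc Q s b) := by ring
                  rw [this, h1', one_mul, hvx]
                  exact hx2
                · exfalso
                  have hx : cc Q r b * cc Q s b * cc Q r a = 1 := by
                    rw [← h1']; ring
                  rw [h0', one_mul] at hx
                  exact hx1 hx
        · -- cc Q r a * cc Q s a = 1
          have hyne : cc Q s a ≠ 1 := by
            intro h
            rw [h, mul_one] at hxy
            exact hx1 hxy
          obtain ⟨b, hw, hbR⟩ := exists_cc_ne_one hq hRS
          have hccrs : ∀ u, cc Q (r + s) u = cc Q r u * cc Q s u := fun u => cc_add_left hq r s u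
          have hw1 : cc Q (r + s) (b + a) = cc Q (r + s) b := by
            rw [cc_add_right hq, hccrs a, hxy, mul_one]
          have hw2 : cc Q (r + s) ((b + a) + a) = cc Q (r + s) b := by
            rw [cc_add_right hq, hw1, hccrs a, hxy, mul_one]
          have ccrba : cc Q r (b + a) = cc Q r b * cc Q r a := cc_add_right hq r b a
          have ccrbaa : cc Q r ((b + a) + a) = cc Q r b * cc Q r a * cc Q r a := by
            rw [cc_add_right hq, ccrba]
          have ccsba : cc Q s (b + a) = cc Q s b * cc Q s a := cc_add_right hq s b a
          have ccsbaa : cc Q s ((b + a) + a) = cc Q s b * cc Q s a * cc Q s a := by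
            rw [cc_add_right hq, ccsba]
          by_cases h0 : cc Q r b ≠ 1 ∧ cc Q s b ≠ 1
          · exact ⟨b, h0.1, h0.2, Or.inr ⟨hRS, hw⟩⟩
          · by_cases h1 : cc Q r b * cc Q r a ≠ 1 ∧ cc Q s b * cc Q s a ≠ 1
            · refine ⟨b + a, ?_, ?_, Or.inr ⟨hRS, ?_⟩⟩
              · rw [ccrba]; exact h1.1
              · rw [ccsba]; exact h1.2
              · rw [hw1]; exact hw
            · have h0' : cc Q r b = 1 ∨ cc Q s b = 1 := by
                by_contra hcon
                push_neg at hcon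
                exact h0 ⟨hcon.1, hcon.2⟩
              have h1' : cc Q r b * cc Q r a = 1 ∨ cc Q s b * cc Q s a = 1 := by
                by_contra hcon
                push_neg at hcon
                exact h1 ⟨hcon.1, hcon.2⟩
              have hyy : cc Q s a * cc Q s a ≠ 1 := by
                intro h
                apply hx2
                have h2 : (cc Q r a * cc Q s a) * (cc Q r a * cc Q s a) = 1 := by
                  rw [hxy, one_mul]
                have h3 : cc Q r a * cc Q r a * (cc Q s a * cc Q s a) = 1 := by
                  rw [← h2]; ring
                rw [h, mul_one] at h3
                exact h3
              refine ⟨(b + a) + a, ?_, ?_, Or.inr ⟨hRS, by rw [hw2]; exact hw⟩⟩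
              · rw [ccrbaa]
                rcases h0' with h0' | h0' <;> rcases h1' with h1' | h1'
                · exfalso; rw [h0', one_mul] at h1'; exact hx1 h1'
                · rw [h0', one_mul]; exact hx2
                · rw [mul_assoc, mul_comm (cc Q r a), ← mul_assoc, h1', one_mul]
                  exact hx1
                · exfalso; rw [h0', one_mul] at h1'; exact hyne h1'
              · rw [ccsbaa]
                rcases h0' with h0' | h0' <;> rcases h1' with h1' | h1'
                · exfalso; rw [h0', one_mul] at h1'; exact hx1 h1'
                · rw [mul_assoc, mul_comm (cc Q s a), ← mul_assoc, h1', one_mul]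
                  exact hyne
                · rw [h0', one_mul]; exact hyy
                · exfalso; rw [h0', one_mul] at h1'; exact hyne h1'
  -- the chain
  have htR : t ∉ Rset d Q := notMem_of_cc_ne_one hq hT1
  have hB1 : φ ((r + s) + t) = φ (r + s) + φ t := by
    rcases hT3 with h | ⟨h1, h2⟩
    · exact phi_addRN hq hγ key h htR
    · exact phi_addNN hq key h1 htR h2
  have hB3 : φ (s + t) = φ s + φ t := phi_addNN hq key hs htR hT2
  have hB2 : φ (r + (s + t)) = φ r + φ (s + t) := by
    by_cases hst : s + t ∈ Rset d Q
    · exact phi_addNR hq hγ key hr hst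
    · refine phi_addNN hq key hr hst ?_
      rw [cc_add_right hq, hrs, one_mul]
      exact hT1
  rw [add_assoc r s t, hB2, hB3] at hB1
  linear_combination -hB1

lemma phi_NN (hq : ∀ i j, Q i j ≠ 0) (hγ : Generic d γ) (key : Key d Q γ φ)
    (hd : 0 < d) {r s : Fin d → ℤ} (hr : r ∉ Rset d Q) (hs : s ∉ Rset d Q)
    (hrs : cc Q r s = 1) : φ (r + s) = φ r + φ s := by
  by_cases hr2 : r + r ∈ Rset d Q
  · by_cases hs2 : s + s ∈ Rset d Q
    · by_cases hrseq : r = s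
      · subst hrseq
        exact phi_double hq hγ key hd r
      · have hne : r + r ≠ s + s := by
          intro h
          apply hrseq
          funext i
          have h2 := congrFun h i
          simp only [Pi.add_apply] at h2
          omega
        have hA : φ ((r + s) + (r + s)) = φ (r + s) + φ (r + s) :=
          phi_double hq hγ key hd (r + s)
        have hEq : (r + s) + (r + s) = (r + r) + (s + s) := by abel
        have hB : φ ((r + r) + (s + s)) = φ (r + r) + φ (s + s) :=
          phi_addRR hq hγ key hr2 hs2 hne
        have hC : φ (r + r) = φ r + φ r := phi_double hq hγ key hd r
        have hD' : φ (s + s) = φ s + φ s := phi_double hq hγ key hd s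
        rw [hEq, hB, hC, hD'] at hA
        linear_combination -hA / 2
    · have hsr : cc Q s r = 1 := by rw [cc_swap, hrs, inv_one]
      have h := phi_hard hq hγ key hs hr hsr hs2
      rw [add_comm s r] at h
      rw [h]
      ring
  · exact phi_hard hq hγ key hr hs hrs hr2

lemma phi_add_all (hq : ∀ i j, Q i j ≠ 0) (hγ : Generic d γ) (key : Key d Q γ φ)
    (hd : 0 < d) (m n : Fin d → ℤ) : φ (m + n) = φ m + φ n := by
  by_cases hm : m ∈ Rset d Q
  · by_cases hmn : m = n
    · subst hmn
      exact phi_double hq hγ key hd m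
    · exact phi_addR hq hγ key hm hmn
  · by_cases hn : n ∈ Rset d Q
    · exact phi_addNR hq hγ key hm hn
    · by_cases hc : cc Q m n = 1
      · exact phi_NN hq hγ key hd hm hn hc
      · exact phi_addNN hq key hm hn hc

end Phi2
end QTorus

namespace QTorus
section Br
variable {d : ℕ} {Q : Matrix (Fin d) (Fin d) ℂ} {γ : Fin d → ℂ}

lemma br_single (m n : Fin d → ℤ) (a b : ℂ) :
    br d Q γ (Finsupp.single m a) (Finsupp.single n b)
      = Finsupp.single (m + n) (a * b * sc d Q γ m n) := by
  unfold br
  rw [Finsupp.sum_single_index (by simp [Finsupp.sum_single_index])]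
  rw [Finsupp.sum_single_index (by simp)]

lemma key_of_der {D : g d →ₗ[ℂ] g d} {φ : (Fin d → ℤ) → ℂ}
    (hD : IsDer d Q γ D) (hφ : ∀ m : Fin d → ℤ, D (L d m) = φ m • L d m) :
    Key d Q γ φ := by
  intro m n hsc
  have h := hD (L d m) (L d n)
  have hbr : br d Q γ (L d m) (L d n) = Finsupp.single (m + n) (sc d Q γ m n) := by
    rw [L, L, br_single, one_mul, one_mul]
  have hsingle : ∀ (u : Fin d → ℤ) (c : ℂ), c • L d u = Finsupp.single u c := by
    intro u c
    rw [L, Finsupp.smul_single', mul_one]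
  have e1 : D (br d Q γ (L d m) (L d n))
      = Finsupp.single (m + n) (sc d Q γ m n * φ (m + n)) := by
    rw [hbr, ← hsingle (m + n) (sc d Q γ m n), map_smul, hφ, smul_smul,
      hsingle]
  have e2 : br d Q γ (D (L d m)) (L d n)
      = Finsupp.single (m + n) (φ m * sc d Q γ m n) := by
    rw [hφ, hsingle, L, br_single, mul_one]
  have e3 : br d Q γ (L d m) (D (L d n))
      = Finsupp.single (m + n) (φ n * sc d Q γ m n) := by
    rw [hφ, hsingle, L, br_single, one_mul]
  rw [e1, e2, e3, ← Finsupp.single_add] at h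
  have hco := DFunLike.congr_fun h (m + n)
  simp only [Finsupp.single_eq_same] at hco
  exact mul_left_cancel₀ hsc (by linear_combination hco)
end Br
end QTorus

/-- if D is a degree-zero derivation of g(γ,Q), D(L_m) = φ(m)L_m, then
φ is additive and D = ∑ φ(e_i)∂_i, i.e. D(L_m) = (∑_i φ(e_i) m_i) L_m for all m;
in particular the degree-zero derivations are exactly the span of ∂_1,…,∂_d. -/
theorem stmt7 (d : ℕ) (hd : 1 < d) (Q : Matrix (Fin d) (Fin d) ℂ) (hQ : QOk d Q)
    (γ : Fin d → ℂ) (hγ : Generic d γ)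
    (D : g d →ₗ[ℂ] g d) (hD : IsDer d Q γ D)
    (φ : (Fin d → ℤ) → ℂ) (hφ : ∀ m : Fin d → ℤ, D (L d m) = φ m • L d m) :
    (∀ m n : Fin d → ℤ, φ (m + n) = φ m + φ n) ∧
    (∀ m : Fin d → ℤ,
      D (L d m) = (∑ i : Fin d, φ (Pi.single i 1) * (m i : ℂ)) • L d m) := by
  have hq := hQ.2.2
  have hd0 : 0 < d := lt_trans zero_lt_one hd
  have key : Key d Q γ φ := key_of_der hD hφ
  have hadd := phi_add_all hq hγ key hd0
  refine ⟨hadd, ?_⟩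
  intro m
  rw [hφ m]
  congr 1
  let ψ : (Fin d → ℤ) →+ ℂ := AddMonoidHom.mk' φ hadd
  calc φ m = ψ m := rfl
    _ = ψ (∑ i : Fin d, Pi.single i (m i)) := by rw [Finset.univ_sum_single]
    _ = ∑ i : Fin d, ψ (Pi.single i (m i)) := map_sum ψ _ _
    _ = ∑ i : Fin d, φ (Pi.single i 1) * (m i : ℂ) := by
        refine Finset.sum_congr rfl fun i _ => ?_
        have hsingle : (Pi.single i (m i) : Fin d → ℤ)
            = m i • (Pi.single i 1 : Fin d → ℤ) := by
          funext j
          by_cases h : j = i <;> simp [h, Pi.single_apply]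
        rw [hsingle, map_zsmul, zsmul_eq_mul, mul_comm]
        rfl
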